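/- Ignoring the stockout term, the expected total cost E[TC(a,Q,t)] = C_o Q E[R_t] + C_h E[∫_0^t X_s ds] satisfies E[TC(a,Q,t)] = C_o Q Σ_{n≥1} P(T_n < t) + C_h x t − C_h (μ + αλ) t²/2 + C_h Q Σ_{n≥1} ( t P(T_n < t) − E[T_n 1_{T_n < t}] ). -/

import Mathlib

open MeasureTheory

lemma tsum_ne_top_of_summable_toReal {f : ℕ → ENNReal} (hfin : ∀ n, f n ≠ ⊤)
    (h : Summable fun n => (f n).toReal) : ∑' n, f n ≠ ⊤ := by
  have : ∀ n, f n = ENNReal.ofReal ((f n).toReal) := fun n => (ENNReal.ofReal_toReal (hfin n)).symm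
  calc ∑' n, f n = ∑' n, ENNReal.ofReal ((f n).toReal) := by exact tsum_congr this
    _ = ENNReal.ofReal (∑' n, (f n).toReal) :=
        (ENNReal.ofReal_tsum_of_nonneg (fun n => ENNReal.toReal_nonneg) h).symm
    _ ≠ ⊤ := ENNReal.ofReal_ne_top

lemma aux_time_integral {Ω : Type*} [MeasurableSpace Ω] (P : Measure Ω)
    [IsProbabilityMeasure P] (T : Ω → ℝ) (hT : Measurable T) (hpos : ∀ ω, 0 ≤ T ω)
    (hint : Integrable T P) {t : ℝ} (ht : 0 < t) :
    ∫ s in Set.Ioc (0:ℝ) t, (P {ω | T ω < s}).toReal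
      = t * (P {ω | T ω < t}).toReal - ∫ ω in {ω | T ω < t}, T ω ∂P := by
  have hA : MeasurableSet {p : ℝ × Ω | T p.2 < p.1} :=
    measurableSet_lt (hT.comp measurable_snd) measurable_fst
  have hSet : ∀ s : ℝ, MeasurableSet {ω | T ω < s} := fun s =>
    measurableSet_lt hT measurable_const
  haveI : IsFiniteMeasure (volume.restrict (Set.Ioc (0:ℝ) t)) :=
    ⟨by rw [Measure.restrict_apply_univ]; exact measure_Ioc_lt_top⟩
  have hFint : Integrable (Function.uncurry fun (s : ℝ) (ω : Ω) => if T ω < s then (1:ℝ) else 0)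
      ((volume.restrict (Set.Ioc (0:ℝ) t)).prod P) := by
    have : (Function.uncurry fun (s : ℝ) (ω : Ω) => if T ω < s then (1:ℝ) else 0)
        = Set.indicator {p : ℝ × Ω | T p.2 < p.1} (fun _ => (1:ℝ)) := by
      ext p; simp [Function.uncurry, Set.indicator_apply, Set.mem_setOf_eq]
    rw [this]
    exact (integrable_const (1:ℝ)).indicator hA
  have hswap := integral_integral_swap hFint
  have hL : ∀ s : ℝ, (∫ ω, (if T ω < s then (1:ℝ) else 0) ∂P) = (P {ω | T ω < s}).toReal := by
    intro s
    have : (fun ω => if T ω < s then (1:ℝ) else 0)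
        = Set.indicator {ω | T ω < s} (fun _ => (1:ℝ)) := by
      ext ω; simp [Set.indicator_apply, Set.mem_setOf_eq]
    rw [this, integral_indicator_const (1:ℝ) (hSet s), smul_eq_mul, mul_one, Measure.real_def]
  have hRfun : ∀ ω : Ω, (∫ s in Set.Ioc (0:ℝ) t, (if T ω < s then (1:ℝ) else 0))
      = Set.indicator {ω | T ω < t} (fun ω => t - T ω) ω := by
    intro ω
    have h1 : (fun s => if T ω < s then (1:ℝ) else 0)
        = Set.indicator (Set.Ioi (T ω)) (fun _ => (1:ℝ)) := by
      ext s; simp [Set.indicator_apply, Set.mem_Ioi]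
    rw [h1, integral_indicator measurableSet_Ioi, Measure.restrict_restrict measurableSet_Ioi,
      setIntegral_const, smul_eq_mul, mul_one]
    have h2 : Set.Ioi (T ω) ∩ Set.Ioc 0 t = Set.Ioc (T ω) t := by
      ext s
      simp only [Set.mem_inter_iff, Set.mem_Ioi, Set.mem_Ioc]
      constructor
      · rintro ⟨h, _, h'⟩; exact ⟨h, h'⟩
      · rintro ⟨h, h'⟩; exact ⟨h, lt_of_le_of_lt (hpos ω) h, h'⟩
    rw [h2, Measure.real_def, Real.volume_Ioc]
    by_cases hω : T ω < t
    · rw [Set.indicator_of_mem (show ω ∈ {ω | T ω < t} from hω),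
        ENNReal.toReal_ofReal (by linarith)]
    · rw [Set.indicator_of_notMem (show ω ∉ {ω | T ω < t} from hω),
        ENNReal.ofReal_of_nonpos (by linarith [not_lt.mp hω])]; simp
  calc ∫ s in Set.Ioc (0:ℝ) t, (P {ω | T ω < s}).toReal
      = ∫ s in Set.Ioc (0:ℝ) t, ∫ ω, (if T ω < s then (1:ℝ) else 0) ∂P := by
        refine setIntegral_congr_fun measurableSet_Ioc (fun s _ => (hL s).symm)
    _ = ∫ ω, (∫ s in Set.Ioc (0:ℝ) t, (if T ω < s then (1:ℝ) else 0)) ∂P := hswap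
    _ = ∫ ω, Set.indicator {ω | T ω < t} (fun ω => t - T ω) ω ∂P := by
        exact integral_congr_ae (Filter.Eventually.of_forall hRfun)
    _ = ∫ ω in {ω | T ω < t}, (t - T ω) ∂P := integral_indicator (hSet t)
    _ = t * (P {ω | T ω < t}).toReal - ∫ ω in {ω | T ω < t}, T ω ∂P := by
        rw [integral_sub (integrable_const t) (hint.integrableOn),
          setIntegral_const, smul_eq_mul, mul_comm, Measure.real_def]

lemma integral_R_eq {Ω : Type*} [MeasurableSpace Ω] (P : Measure Ω)
    [IsProbabilityMeasure P] (T : ℕ → Ω → ℝ) (hTmeas : ∀ n, Measurable (T n))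
    (Rs : Ω → ℝ) (s : ℝ)
    (hR : ∀ ω, HasSum (fun n : ℕ => if T n ω < s then (1:ℝ) else 0) (Rs ω))
    (hfin : ∑' n : ℕ, P {ω | T n ω < s} ≠ ⊤) :
    ∫ ω, Rs ω ∂P = ∑' n : ℕ, (P {ω | T n ω < s}).toReal := by
  have hind : ∀ n : ℕ, (fun ω => if T n ω < s then (1:ℝ) else 0)
      = Set.indicator {ω | T n ω < s} (fun _ => (1:ℝ)) := by
    intro n; ext ω; simp [Set.indicator_apply, Set.mem_setOf_eq]
  have hSet : ∀ n : ℕ, MeasurableSet {ω | T n ω < s} := fun n =>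
    measurableSet_lt (hTmeas n) measurable_const
  have hmeas : ∀ n : ℕ, AEStronglyMeasurable (fun ω => if T n ω < s then (1:ℝ) else 0) P := by
    intro n; rw [hind n]
    exact ((measurable_const.indicator (hSet n)).stronglyMeasurable).aestronglyMeasurable
  have hlin : ∀ n : ℕ, ∫⁻ ω, ‖if T n ω < s then (1:ℝ) else 0‖ₑ ∂P = P {ω | T n ω < s} := by
    intro n
    have : ∀ ω, (‖if T n ω < s then (1:ℝ) else 0‖ₑ : ENNReal)
        = Set.indicator {ω | T n ω < s} (fun _ => (1:ENNReal)) ω := by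
      intro ω; by_cases h : T n ω < s <;> simp [h, Set.indicator_apply, Set.mem_setOf_eq]
    simp_rw [this]
    rw [lintegral_indicator (hSet n) (fun _ => (1:ENNReal))]
    simp
  have h1 : ∫ ω, Rs ω ∂P = ∫ ω, ∑' n : ℕ, (if T n ω < s then (1:ℝ) else 0) ∂P := by
    refine integral_congr_ae (Filter.Eventually.of_forall fun ω => ?_)
    exact ((hR ω).tsum_eq).symm
  rw [h1, integral_tsum hmeas (by simpa [hlin] using hfin)]
  congr 1; ext n
  rw [hind n, integral_indicator_const (1:ℝ) (hSet n), smul_eq_mul, mul_one, Measure.real_def]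


/-- Expected total cost (stockout term assumed zero):
`E[TC(a,Q,t)] = C_o Q ∑_n P(T_n < t) + C_h x t − C_h (μ + α λ) t²/2`
`+ C_h Q ∑_n ( t P(T_n < t) − E[T_n 1_{T_n < t}] )`,
where `TC(a,Q,t) = C_o Q R_t + C_h ∫_0^t X_s ds`, `X_s = x − (μ s + α N_s) + Q R_s`. -/
theorem expected_total_cost {Ω : Type*} [MeasurableSpace Ω] (P : Measure Ω)
    [IsProbabilityMeasure P] (N : ℝ → Ω → ℝ) (T : ℕ → Ω → ℝ) (R : ℝ → Ω → ℝ)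
    (x a Q μ α lam t Co Ch : ℝ) (hx : 0 < x) (ha : 0 < a) (hQ : 0 < Q)
    (hμ : 0 < μ) (hα : 0 < α) (hlam : 0 < lam) (ht : 0 < t)
    (hCo : 0 < Co) (hCh : 0 < Ch)
    (hNint : ∀ s, Integrable (N s) P) (hNmean : ∀ s, ∫ ω, N s ω ∂P = lam * s)
    (hTmeas : ∀ n, Measurable (T n)) (hTpos : ∀ n ω, 0 ≤ T n ω)
    (hTint : ∀ n, Integrable (T n) P)
    (hR : ∀ s ω, HasSum (fun n : ℕ => if T n ω < s then (1:ℝ) else 0) (R s ω))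
    (hRt : Integrable (R t) P)
    (hsum : Summable fun n : ℕ => (P {ω | T n ω < t}).toReal)
    (hX : Integrable (fun p : ℝ × Ω => x - (μ * p.1 + α * N p.1 p.2) + Q * R p.1 p.2)
        ((volume.restrict (Set.Ioc 0 t)).prod P)) :
    ∫ ω, (Co * Q * R t ω
        + Ch * ∫ s in (0:ℝ)..t, (x - (μ * s + α * N s ω) + Q * R s ω)) ∂P
      = Co * Q * (∑' n : ℕ, (P {ω | T n ω < t}).toReal)
        + Ch * x * t - Ch * (μ + α * lam) * t ^ 2 / 2
        + Ch * Q * ∑' n : ℕ, (t * (P {ω | T n ω < t}).toReal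
            - ∫ ω in {ω | T n ω < t}, T n ω ∂P) := by
  haveI : IsFiniteMeasure (volume.restrict (Set.Ioc (0:ℝ) t)) :=
    ⟨by rw [Measure.restrict_apply_univ]; exact measure_Ioc_lt_top⟩
  have hfin_t : ∑' n : ℕ, P {ω | T n ω < t} ≠ ⊤ :=
    tsum_ne_top_of_summable_toReal (fun n => measure_ne_top P _) hsum
  have hfin_s : ∀ s : ℝ, s ≤ t → ∑' n : ℕ, P {ω | T n ω < s} ≠ ⊤ := by
    intro s hs
    refine ne_top_of_le_ne_top hfin_t (ENNReal.tsum_le_tsum fun n => ?_)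
    exact measure_mono (fun ω hw => lt_of_lt_of_le hw hs)
  have hIint : Integrable
      (fun ω => ∫ s in Set.Ioc (0:ℝ) t, (x - (μ * s + α * N s ω) + Q * R s ω)) P :=
    hX.integral_prod_right
  have hERt : ∫ ω, R t ω ∂P = ∑' n : ℕ, (P {ω | T n ω < t}).toReal :=
    integral_R_eq P T hTmeas (R t) t (fun ω => hR t ω) hfin_t
  have hswap : ∫ ω, (∫ s in Set.Ioc (0:ℝ) t, (x - (μ * s + α * N s ω) + Q * R s ω)) ∂P
      = ∫ s in Set.Ioc (0:ℝ) t, (∫ ω, (x - (μ * s + α * N s ω) + Q * R s ω) ∂P) :=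
    (integral_integral_swap hX).symm
  set h : ℝ → ℝ := fun s => ∑' n : ℕ, (P {ω | T n ω < s}).toReal with hh
  have hkey : ∀ᵐ s ∂(volume.restrict (Set.Ioc (0:ℝ) t)),
      (∫ ω, (x - (μ * s + α * N s ω) + Q * R s ω) ∂P)
        = x - (μ + α * lam) * s + Q * h s := by
    filter_upwards [hX.prod_right_ae, ae_restrict_mem measurableSet_Ioc] with s hXs hsmem
    have hNs : Integrable (fun ω => μ * s + α * N s ω) P :=
      (integrable_const _).add ((hNint s).const_mul α)
    have hQR : Integrable (fun ω => Q * R s ω) P := by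
      have he : (fun ω => Q * R s ω)
          = fun ω => (x - (μ * s + α * N s ω) + Q * R s ω) - (x - (μ * s + α * N s ω)) := by
        ext ω; ring
      rw [he]; exact hXs.sub ((integrable_const x).sub hNs)
    have h2 : Integrable (fun ω => x - (μ * s + α * N s ω)) P := (integrable_const x).sub hNs
    have hERs : ∫ ω, R s ω ∂P = h s :=
      integral_R_eq P T hTmeas (R s) s (fun ω => hR s ω) (hfin_s s hsmem.2)
    have hQERs : ∫ ω, Q * R s ω ∂P = Q * h s := by rw [integral_const_mul, hERs]
    rw [integral_add h2 hQR,
      integral_sub (integrable_const x) hNs,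
      integral_add (integrable_const _) ((hNint s).const_mul α)]
    simp only [integral_const, integral_const_mul, probReal_univ, ENNReal.toReal_one,
      one_smul, smul_eq_mul, one_mul]
    rw [hNmean s, hERs]
    ring
  have hmono : ∀ n : ℕ, Monotone fun s : ℝ => P {ω | T n ω < s} := fun n s1 s2 h12 =>
    measure_mono (fun ω hw => lt_of_lt_of_le hw h12)
  have hhmeas : Measurable h := by
    have he : h = fun s => (∑' n : ℕ, P {ω | T n ω < s}).toReal := by
      ext s; rw [ENNReal.tsum_toReal_eq (fun n => measure_ne_top P _)]
    rw [he]
    exact (Measurable.ennreal_tsum fun n => (hmono n).measurable).ennreal_toReal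
  have hhnonneg : ∀ s, 0 ≤ h s := fun s => tsum_nonneg fun n => ENNReal.toReal_nonneg
  have hhle : ∀ s : ℝ, s ≤ t → h s ≤ h t := by
    intro s hs
    refine Summable.tsum_le_tsum (fun n => ?_)
      (hsum.of_nonneg_of_le (fun n => ENNReal.toReal_nonneg) (fun n => ?_)) hsum
    · exact ENNReal.toReal_mono (measure_ne_top P _)
        (measure_mono fun ω hw => lt_of_lt_of_le hw hs)
    · exact ENNReal.toReal_mono (measure_ne_top P _)
        (measure_mono fun ω hw => lt_of_lt_of_le hw hs)
  have hhint : Integrable h (volume.restrict (Set.Ioc (0:ℝ) t)) := by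
    refine Integrable.mono' (integrable_const (h t)) hhmeas.aestronglyMeasurable ?_
    filter_upwards [ae_restrict_mem measurableSet_Ioc] with s hs
    rw [Real.norm_of_nonneg (hhnonneg s)]; exact hhle s hs.2
  have hsint : Integrable (fun s : ℝ => (μ + α * lam) * s)
      (volume.restrict (Set.Ioc (0:ℝ) t)) :=
    (continuous_id.integrableOn_Ioc).integrable.const_mul _
  have hvol : (volume (Set.Ioc (0:ℝ) t)).toReal = t := by
    rw [Real.volume_Ioc, ENNReal.toReal_ofReal (by linarith)]; ring
  have hintx : ∫ _ in Set.Ioc (0:ℝ) t, x = t * x := by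
    rw [setIntegral_const, smul_eq_mul, Measure.real_def, hvol]
  have hints : ∫ s in Set.Ioc (0:ℝ) t, s = t ^ 2 / 2 := by
    rw [← intervalIntegral.integral_of_le ht.le, integral_id]; ring
  have hmeas_n : ∀ n : ℕ, Measurable fun s : ℝ => (P {ω | T n ω < s}).toReal := fun n =>
    ((hmono n).measurable).ennreal_toReal
  have hsum_lint : ∑' n : ℕ, ∫⁻ s in Set.Ioc (0:ℝ) t,
      ‖(P {ω | T n ω < s}).toReal‖₊ ≠ ⊤ := by
    have hle : ∀ n : ℕ, ∫⁻ s in Set.Ioc (0:ℝ) t, ‖(P {ω | T n ω < s}).toReal‖₊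
        ≤ P {ω | T n ω < t} * volume (Set.Ioc (0:ℝ) t) := by
      intro n
      calc ∫⁻ s in Set.Ioc (0:ℝ) t, ‖(P {ω | T n ω < s}).toReal‖₊
          ≤ ∫⁻ _ in Set.Ioc (0:ℝ) t, P {ω | T n ω < t} := by
            refine lintegral_mono_ae ?_
            filter_upwards [ae_restrict_mem measurableSet_Ioc] with s hs
            have he : (‖(P {ω | T n ω < s}).toReal‖₊ : ENNReal) = P {ω | T n ω < s} := by
              rw [← enorm_eq_nnnorm, Real.enorm_eq_ofReal ENNReal.toReal_nonneg,
                ENNReal.ofReal_toReal (measure_ne_top P _)]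
            rw [he]
            exact measure_mono fun ω hw => lt_of_lt_of_le hw hs.2
        _ = P {ω | T n ω < t} * volume (Set.Ioc (0:ℝ) t) := by
            rw [lintegral_const, Measure.restrict_apply_univ]
    refine ne_top_of_le_ne_top ?_ (ENNReal.tsum_le_tsum hle)
    rw [ENNReal.tsum_mul_right]
    exact ENNReal.mul_ne_top hfin_t (by rw [Real.volume_Ioc]; exact ENNReal.ofReal_ne_top)
  have hinth : ∫ s in Set.Ioc (0:ℝ) t, h s
      = ∑' n : ℕ, (t * (P {ω | T n ω < t}).toReal - ∫ ω in {ω | T n ω < t}, T n ω ∂P) := by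
    rw [integral_tsum (fun n => (hmeas_n n).aestronglyMeasurable) hsum_lint]
    exact tsum_congr fun n => aux_time_integral P (T n) (hTmeas n) (hTpos n) (hTint n) ht
  calc ∫ ω, (Co * Q * R t ω
        + Ch * ∫ s in (0:ℝ)..t, (x - (μ * s + α * N s ω) + Q * R s ω)) ∂P
      = ∫ ω, (Co * Q * R t ω
        + Ch * ∫ s in Set.Ioc (0:ℝ) t, (x - (μ * s + α * N s ω) + Q * R s ω)) ∂P := by
        simp_rw [intervalIntegral.integral_of_le ht.le]
    _ = Co * Q * (∫ ω, R t ω ∂P)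
        + Ch * ∫ ω, (∫ s in Set.Ioc (0:ℝ) t, (x - (μ * s + α * N s ω) + Q * R s ω)) ∂P := by
        rw [integral_add (hRt.const_mul _) (hIint.const_mul Ch), integral_const_mul,
          integral_const_mul]
    _ = Co * Q * (∑' n : ℕ, (P {ω | T n ω < t}).toReal)
        + Ch * ∫ s in Set.Ioc (0:ℝ) t, (x - (μ + α * lam) * s + Q * h s) := by
        rw [hERt, hswap, integral_congr_ae hkey]
    _ = Co * Q * (∑' n : ℕ, (P {ω | T n ω < t}).toReal)
        + Ch * (t * x - (μ + α * lam) * (t ^ 2 / 2) + Q * ∫ s in Set.Ioc (0:ℝ) t, h s) := by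
        have h3 : Integrable (fun s : ℝ => x - (μ + α * lam) * s)
            (volume.restrict (Set.Ioc (0:ℝ) t)) := (integrable_const x).sub hsint
        rw [integral_add h3 (hhint.const_mul Q),
          integral_sub (integrable_const x) hsint, integral_const_mul, integral_const_mul,
          hintx, hints]
    _ = Co * Q * (∑' n : ℕ, (P {ω | T n ω < t}).toReal)
        + Ch * x * t - Ch * (μ + α * lam) * t ^ 2 / 2
        + Ch * Q * ∑' n : ℕ, (t * (P {ω | T n ω < t}).toReal
            - ∫ ω in {ω | T n ω < t}, T n ω ∂P) := by
        rw [hinth]; ring
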